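/- Let 2 ≤ r ≤ n − 1 be integers, set δ := n − r + 1, and let C₁ and C₂ be linear codes of length n over 𝔽_q, each with minimum distance at least δ. Let C be a nonzero linear subcode of C₁ ⊗ C₂ with dimension k ≥ 2 and minimum distance d. Then d ≤ n² − k + 1 − ⌊(k−2)/(r−1)⌋ · (δ − 1). -/

import Mathlib

open scoped Classical

/-- Hamming weight of a matrix: the number of nonzero entries. -/
noncomputable def matWeight {K : Type*} [Zero K] {m n : ℕ}
    (c : Matrix (Fin m) (Fin n) K) : ℕ :=
  (Finset.univ.filter fun p : Fin m × Fin n => c p.1 p.2 ≠ 0).card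

/-- Membership in the tensor product code `C₁ ⊗ C₂`: every column (transposed) lies in
`C₁` and every row lies in `C₂`. -/
def MemProd {K : Type*} [Field K] {m n : ℕ}
    (C₁ : Submodule K (Fin m → K)) (C₂ : Submodule K (Fin n → K))
    (c : Matrix (Fin m) (Fin n) K) : Prop :=
  (∀ j, (fun i => c i j) ∈ C₁) ∧ (∀ i, (fun j => c i j) ∈ C₂)

lemma exists_vanish {K : Type*} [Field K] {n : ℕ}
    (C : Submodule K (Matrix (Fin n) (Fin n) K)) {k : ℕ}
    (hk : Module.finrank K ↥C = k) (S : Finset (Fin n × Fin n)) (hS : S.card < k) :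
    ∃ c ∈ C, c ≠ 0 ∧ ∀ p ∈ S, c p.1 p.2 = 0 := by
  let L : ↥C →ₗ[K] (↥S → K) :=
    { toFun := fun x p => (x : Matrix (Fin n) (Fin n) K) p.1.1 p.1.2
      map_add' := fun x y => rfl
      map_smul' := fun a x => rfl }
  have h1 := LinearMap.finrank_range_add_finrank_ker L
  rw [hk] at h1
  have h2 : Module.finrank K ↥(LinearMap.range L) ≤ S.card := by
    have h := Submodule.finrank_le (LinearMap.range L)
    rwa [Module.finrank_fintype_fun_eq_card, Fintype.card_coe] at h
  have h3 : LinearMap.ker L ≠ ⊥ := by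
    intro hbot
    rw [hbot, finrank_bot] at h1
    omega
  obtain ⟨x, hxker, hx0⟩ := Submodule.exists_mem_ne_zero_of_ne_bot h3
  refine ⟨x.1, x.2, ?_, ?_⟩
  · intro h
    exact hx0 (Subtype.ext h)
  · intro p hp
    have hL : L x = 0 := LinearMap.mem_ker.mp hxker
    have := congrFun hL ⟨p, hp⟩
    exact this

lemma weight_le {K : Type*} [Field K] {n : ℕ} (c : Matrix (Fin n) (Fin n) K)
    (Z : Finset (Fin n × Fin n)) (hZ : ∀ p ∈ Z, c p.1 p.2 = 0) :
    matWeight c ≤ n * n - Z.card := by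
  have hsub : (Finset.univ.filter fun p : Fin n × Fin n => c p.1 p.2 ≠ 0) ⊆ Zᶜ := by
    intro p hp
    exact Finset.mem_compl.mpr fun hpZ => (Finset.mem_filter.mp hp).2 (hZ p hpZ)
  have h := Finset.card_le_card hsub
  rw [Finset.card_compl, Fintype.card_prod, Fintype.card_fin] at h
  exact h

lemma kill {K : Type*} [Field K] {n r : ℕ}
    (W : Submodule K (Fin n → K))
    (hW : ∀ c ∈ W, c ≠ 0 → n - r + 1 ≤ (Finset.univ.filter fun i => c i ≠ 0).card)
    (v : Fin n → K) (hv : v ∈ W) (T : Finset (Fin n)) (hT : r ≤ T.card)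
    (hz : ∀ j ∈ T, v j = 0) : v = 0 := by
  by_contra h
  have h1 := hW v hv h
  have hsub : (Finset.univ.filter fun i => v i ≠ 0) ⊆ Tᶜ := by
    intro i hi
    exact Finset.mem_compl.mpr fun hiT => (Finset.mem_filter.mp hi).2 (hz i hiT)
  have h2 := Finset.card_le_card hsub
  rw [Finset.card_compl, Fintype.card_fin] at h2
  have h3 : T.card ≤ n := by
    have := Finset.card_le_univ T
    simpa using this
  omega

lemma card_filter_val_lt (n r : ℕ) (h : r ≤ n) :
    (Finset.univ.filter fun j : Fin n => (j : ℕ) < r).card = r := by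
  have he : (Finset.univ.filter fun j : Fin n => (j : ℕ) < r)
      = (Finset.range r).attachFin
        (fun m hm => lt_of_lt_of_le (Finset.mem_range.mp hm) h) := by
    ext j
    simp [Finset.mem_attachFin]
  rw [he, Finset.card_attachFin, Finset.card_range]

lemma card_filter_B (n r : ℕ) (h : r ≤ n) (hr : 1 ≤ r) :
    (Finset.univ.filter fun i : Fin n => (i : ℕ) ≠ 0 ∧ (i : ℕ) < r).card = r - 1 := by
  have he : (Finset.univ.filter fun i : Fin n => (i : ℕ) ≠ 0 ∧ (i : ℕ) < r)
      = ((Finset.range r).erase 0).attachFin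
        (fun m hm => lt_of_lt_of_le (Finset.mem_range.mp (Finset.mem_of_mem_erase hm)) h) := by
    ext i
    simp [Finset.mem_attachFin, Finset.mem_erase, and_comm]
  rw [he, Finset.card_attachFin, Finset.card_erase_of_mem (Finset.mem_range.mpr hr),
    Finset.card_range]

lemma card_filter_ne_zero (n : ℕ) :
    (Finset.univ.filter fun i : Fin (n+1) => (i : ℕ) ≠ 0).card = n := by
  have he : (Finset.univ.filter fun i : Fin (n+1) => (i : ℕ) ≠ 0)
      = Finset.univ.erase 0 := by
    ext i
    simp only [Finset.mem_filter, Finset.mem_univ, true_and, Finset.mem_erase, and_true, ne_eq]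
    exact not_congr Fin.val_eq_zero_iff
  rw [he, Finset.card_erase_of_mem (Finset.mem_univ _)]
  simp

/-- Let `2 ≤ r ≤ n − 1`, set `δ := n − r + 1`, let `C₁, C₂` be linear
codes of length `n` over a finite field, each of minimum distance at least `δ`, and let
`C ⊆ C₁ ⊗ C₂` be a nonzero linear subcode of dimension `k ≥ 2` and minimum distance `d`.
Then `d ≤ n² − k + 1 − ⌊(k−2)/(r−1)⌋·(δ − 1)`, where `δ − 1 = n − r`. -/
theorem stmt_17 (q : ℕ) (K : Type*) [Field K] [Fintype K] (hq : Fintype.card K = q)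
    (n r : ℕ) (h2 : 2 ≤ r) (hrn : r ≤ n - 1)
    (C₁ C₂ : Submodule K (Fin n → K))
    (hC₁ : ∀ c ∈ C₁, c ≠ 0 → n - r + 1 ≤ (Finset.univ.filter fun i => c i ≠ 0).card)
    (hC₂ : ∀ c ∈ C₂, c ≠ 0 → n - r + 1 ≤ (Finset.univ.filter fun i => c i ≠ 0).card)
    (C : Submodule K (Matrix (Fin n) (Fin n) K))
    (hC : ∀ c ∈ C, MemProd C₁ C₂ c) (hCne : C ≠ ⊥)
    (k : ℕ) (hk : Module.finrank K ↥C = k) (hk2 : 2 ≤ k)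
    (d : ℕ) (hd : IsLeast {w : ℕ | ∃ c ∈ C, c ≠ 0 ∧ matWeight c = w} d) :
    (d : ℤ) ≤ (n : ℤ) ^ 2 - (k : ℤ) + 1 - (((k - 2) / (r - 1) : ℕ) : ℤ) * ((n : ℤ) - r) := by
  obtain ⟨n', rfl⟩ : ∃ n', n = n' + 1 := ⟨n - 1, by omega⟩
  obtain ⟨r', rfl⟩ : ∃ r', r = r' + 1 := ⟨r - 1, by omega⟩
  have hr1 : 1 ≤ r' := by omega
  have hrn' : r' + 1 ≤ n' := by omega
  have hkn : k ≤ (n' + 1) * (n' + 1) := by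
    rw [← hk]
    have h := Submodule.finrank_le C
    simpa [Module.finrank_matrix] using h
  simp only [Nat.add_sub_cancel]
  obtain ⟨tt, htt⟩ : ∃ x, (k - 2) / r' = x := ⟨_, rfl⟩
  obtain ⟨ll, hll⟩ : ∃ x, (k - 2) % r' = x := ⟨_, rfl⟩
  rw [htt]
  have hdiv : r' * tt + ll = k - 2 := by rw [← htt, ← hll]; exact Nat.div_add_mod _ _
  have hllr : ll < r' := hll ▸ Nat.mod_lt _ (by omega)
  -- the sets A (first r columns/rows) and B (rows 1..r-1)
  set A : Finset (Fin (n' + 1)) := Finset.univ.filter fun j => (j : ℕ) < r' + 1 with hA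
  set B : Finset (Fin (n' + 1)) :=
    Finset.univ.filter (fun i => (i : ℕ) ≠ 0 ∧ (i : ℕ) < r' + 1) with hB
  have hAcard : A.card = r' + 1 := card_filter_val_lt _ _ (by omega)
  have hBcard : B.card = r' := by
    have := card_filter_B (n' + 1) (r' + 1) (by omega) (by omega)
    simpa only [Nat.add_sub_cancel] using this
  rcases Nat.eq_zero_or_pos tt with ht0 | htpos
  · -- classic Singleton bound
    subst ht0
    obtain ⟨S, _, hScard⟩ := Finset.exists_subset_card_eq
      (show k - 1 ≤ (Finset.univ : Finset (Fin (n' + 1) × Fin (n' + 1))).card by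
        rw [Finset.card_univ, Fintype.card_prod, Fintype.card_fin]; omega)
    obtain ⟨c, hcC, hcne, hcz⟩ := exists_vanish C hk S (by omega)
    have hw := weight_le c S hcz
    rw [hScard] at hw
    have hdle : d ≤ matWeight c := hd.2 ⟨c, hcC, hcne, rfl⟩
    have hsq : ((n' + 1 : ℕ) : ℤ) ^ 2 = (((n' + 1) * (n' + 1) : ℕ) : ℤ) := by push_cast; ring
    rw [hsq]
    simp only [Nat.cast_zero, zero_mul, sub_zero]
    generalize (n' + 1) * (n' + 1) = N at hw hkn
    omega
  by_cases hbig : n' + 2 ≤ tt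
  · -- impossible: constraints would kill the whole codeword
    exfalso
    set S : Finset (Fin (n' + 1) × Fin (n' + 1)) :=
      (({0} : Finset (Fin (n' + 1))) ×ˢ A) ∪ (B ×ˢ Finset.univ) with hS
    have hScard : S.card < k := by
      have h1 := Finset.card_union_le (({0} : Finset (Fin (n' + 1))) ×ˢ A)
        (B ×ˢ (Finset.univ : Finset (Fin (n' + 1))))
      rw [Finset.card_product, Finset.card_product, hAcard, hBcard, Finset.card_singleton,
        Finset.card_univ, Fintype.card_fin, one_mul] at h1
      rw [← hS] at h1
      have h4 : r' * (n' + 1) + r' ≤ r' * tt := by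
        calc r' * (n' + 1) + r' = r' * (n' + 2) := by ring
        _ ≤ r' * tt := Nat.mul_le_mul_left _ hbig
      generalize r' * tt = b at hdiv h4
      generalize r' * (n' + 1) = a at h1 h4
      omega
    obtain ⟨c, hcC, hcne, hcz⟩ := exists_vanish C hk S hScard
    have hrow : (fun j => c 0 j) = 0 := by
      refine kill C₂ hC₂ _ ((hC c hcC).2 0) A (le_of_eq hAcard.symm) ?_
      intro j hj
      exact hcz (0, j) (Finset.mem_union_left _
        (Finset.mem_product.mpr ⟨Finset.mem_singleton_self 0, hj⟩))
    have hrow' : ∀ j, c 0 j = 0 := fun j => congrFun hrow j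
    have hcol : ∀ j i, c i j = 0 := by
      intro j
      have h0 : (fun i => c i j) = 0 := by
        refine kill C₁ hC₁ _ ((hC c hcC).1 j) A (le_of_eq hAcard.symm) ?_
        intro i hi
        by_cases h : (i : ℕ) = 0
        · have hi0 : i = 0 := Fin.ext (by simpa using h)
          rw [hi0]; exact hrow' j
        · refine hcz (i, j) (Finset.mem_union_right _ (Finset.mem_product.mpr ⟨?_, Finset.mem_univ _⟩))
          rw [hB]
          exact Finset.mem_filter.mpr ⟨Finset.mem_univ _, h, by
            have := Finset.mem_filter.mp (hA ▸ hi)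
            exact this.2⟩
      exact fun i => congrFun h0 i
    apply hcne
    ext i j
    exact hcol j i
  · -- main case : 1 ≤ tt ≤ n' + 1
    obtain ⟨t', rfl⟩ : ∃ t', tt = t' + 1 := ⟨tt - 1, by omega⟩
    have ht'n : t' ≤ n' := by omega
    obtain ⟨Col, _, hColcard⟩ := Finset.exists_subset_card_eq
      (show t' ≤ (Finset.univ : Finset (Fin (n' + 1))).card by
        rw [Finset.card_univ, Fintype.card_fin]; omega)
    have hj0ex : ∃ j₀, j₀ ∉ Col := by
      by_contra h
      push_neg at h
      have hsub : (Finset.univ : Finset (Fin (n' + 1))) ⊆ Col := fun x _ => h x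
      have := Finset.card_le_card hsub
      rw [Finset.card_univ, Fintype.card_fin, hColcard] at this
      omega
    obtain ⟨j₀, hj₀⟩ := hj0ex
    set R1 : Finset (Fin (n' + 1)) := Finset.univ.filter (fun i => (i : ℕ) ≠ 0) with hR1def
    have hR1 : R1.card = n' := card_filter_ne_zero n'
    obtain ⟨F, hFsub, hFcard⟩ := Finset.exists_subset_card_eq
      (show ll ≤ (R1 ×ˢ ({j₀} : Finset (Fin (n' + 1)))).card by
        rw [Finset.card_product, hR1, Finset.card_singleton, mul_one]; omega)
    set S : Finset (Fin (n' + 1) × Fin (n' + 1)) :=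
      ((({0} : Finset (Fin (n' + 1))) ×ˢ A) ∪ (B ×ˢ Col)) ∪ F with hS
    have hScard : S.card < k := by
      have h1 := Finset.card_union_le ((({0} : Finset (Fin (n' + 1))) ×ˢ A) ∪ (B ×ˢ Col)) F
      have h2 := Finset.card_union_le (({0} : Finset (Fin (n' + 1))) ×ˢ A) (B ×ˢ Col)
      rw [Finset.card_product, Finset.card_product, hAcard, hBcard, Finset.card_singleton,
        hColcard, one_mul] at h2
      rw [hFcard, ← hS] at h1
      have h5 : r' * (t' + 1) = r' * t' + r' := by ring
      generalize r' * t' = a at h2 h5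
      generalize r' * (t' + 1) = b at hdiv h5
      omega
    obtain ⟨c, hcC, hcne, hcz⟩ := exists_vanish C hk S hScard
    have hrow : (fun j => c 0 j) = 0 := by
      refine kill C₂ hC₂ _ ((hC c hcC).2 0) A (le_of_eq hAcard.symm) ?_
      intro j hj
      exact hcz (0, j) (Finset.mem_union_left _ (Finset.mem_union_left _
        (Finset.mem_product.mpr ⟨Finset.mem_singleton_self 0, hj⟩)))
    have hrow' : ∀ j, c 0 j = 0 := fun j => congrFun hrow j
    have hcol : ∀ j ∈ Col, ∀ i, c i j = 0 := by
      intro j hj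
      have h0 : (fun i => c i j) = 0 := by
        refine kill C₁ hC₁ _ ((hC c hcC).1 j) A (le_of_eq hAcard.symm) ?_
        intro i hi
        by_cases h : (i : ℕ) = 0
        · have hi0 : i = 0 := Fin.ext (by simpa using h)
          rw [hi0]; exact hrow' j
        · refine hcz (i, j) (Finset.mem_union_left _ (Finset.mem_union_right _
            (Finset.mem_product.mpr ⟨?_, hj⟩)))
          rw [hB]
          exact Finset.mem_filter.mpr ⟨Finset.mem_univ _, h, by
            have := Finset.mem_filter.mp (hA ▸ hi)
            exact this.2⟩
      exact fun i => congrFun h0 i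
    set Z : Finset (Fin (n' + 1) × Fin (n' + 1)) :=
      ((({0} : Finset (Fin (n' + 1))) ×ˢ (Finset.univ : Finset (Fin (n' + 1)))) ∪
        (R1 ×ˢ Col)) ∪ F with hZ
    have hZzero : ∀ p ∈ Z, c p.1 p.2 = 0 := by
      intro p hp
      rw [hZ] at hp
      rcases Finset.mem_union.mp hp with hp1 | hpF
      · rcases Finset.mem_union.mp hp1 with hpr | hpc
        · have h1 := (Finset.mem_product.mp hpr).1
          rw [Finset.mem_singleton] at h1
          rw [h1]
          exact hrow' p.2
        · exact hcol p.2 (Finset.mem_product.mp hpc).2 p.1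
      · exact hcz p (Finset.mem_union_right _ hpF)
    have hd1 : Disjoint ((({0} : Finset (Fin (n' + 1))) ×ˢ (Finset.univ : Finset (Fin (n' + 1))))) (R1 ×ˢ Col) := by
      rw [Finset.disjoint_left]
      intro p hp hp'
      have h1 := (Finset.mem_product.mp hp).1
      rw [Finset.mem_singleton] at h1
      have h2 := (Finset.mem_product.mp hp').1
      rw [hR1def] at h2
      have := (Finset.mem_filter.mp h2).2
      apply this
      rw [h1]
      simp
    have hd2 : Disjoint ((({0} : Finset (Fin (n' + 1))) ×ˢ (Finset.univ : Finset (Fin (n' + 1)))) ∪ (R1 ×ˢ Col)) F := by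
      rw [Finset.disjoint_left]
      intro p hp hpF
      have hF2 := hFsub hpF
      have hpj : p.2 = j₀ := by
        have := (Finset.mem_product.mp hF2).2
        rwa [Finset.mem_singleton] at this
      have hpne : (p.1 : ℕ) ≠ 0 := by
        have := (Finset.mem_product.mp hF2).1
        rw [hR1def] at this
        exact (Finset.mem_filter.mp this).2
      rcases Finset.mem_union.mp hp with hpr | hpc
      · have h1 := (Finset.mem_product.mp hpr).1
        rw [Finset.mem_singleton] at h1
        apply hpne
        rw [h1]
        simp
      · have := (Finset.mem_product.mp hpc).2
        rw [hpj] at this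
        exact hj₀ this
    have hZcard : Z.card = (n' + 1) + n' * t' + ll := by
      rw [hZ, Finset.card_union_of_disjoint hd2, Finset.card_union_of_disjoint hd1,
        Finset.card_product, Finset.card_product, Finset.card_singleton, Finset.card_univ,
        Fintype.card_fin, hR1, hColcard, hFcard, one_mul]
    have hw := weight_le c Z hZzero
    rw [hZcard] at hw
    have hZle : (n' + 1) + n' * t' + ll ≤ (n' + 1) * (n' + 1) := by
      have h := Finset.card_le_univ Z
      rw [hZcard] at h
      simpa [Fintype.card_prod] using h
    have hdle : d ≤ matWeight c := hd.2 ⟨c, hcC, hcne, rfl⟩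
    have h6 : d + ((n' + 1) + n' * t' + ll) ≤ (n' + 1) * (n' + 1) := by
      generalize n' * t' = a at hw hZle ⊢
      generalize (n' + 1) * (n' + 1) = N at hw hZle ⊢
      omega
    have h7 : k = r' * (t' + 1) + ll + 2 := by
      generalize r' * (t' + 1) = b at hdiv ⊢
      omega
    have h6' : (d : ℤ) + (((n' : ℤ) + 1) + (n' : ℤ) * (t' : ℤ) + (ll : ℤ))
        ≤ ((n' : ℤ) + 1) * ((n' : ℤ) + 1) := by exact_mod_cast h6
    rw [h7]
    push_cast
    have key : ((n' : ℤ) + 1) ^ 2 - ((r' : ℤ) * ((t' : ℤ) + 1) + (ll : ℤ) + 2) + 1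
        - ((t' : ℤ) + 1) * (((n' : ℤ) + 1) - ((r' : ℤ) + 1))
        = ((n' : ℤ) + 1) * ((n' : ℤ) + 1) - (((n' : ℤ) + 1) + (n' : ℤ) * (t' : ℤ) + (ll : ℤ)) := by
      ring
    linarith [h6', key]
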